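/- If each f_n commutes with f, each f_n is feeble open (the image of every nonempty open set has nonempty interior) and surjective, Σ_{n=1}^∞ D(f_n, f) < ∞, and (X, f) is topologically transitive, then (X, F) is topologically transitive: for every pair of nonempty open sets U, V ⊆ X there exists n ∈ ℕ with ω_n(U) ∩ V ≠ ∅. -/

import Mathlib

open Filter Metric Set

noncomputable def supD {X : Type*} [MetricSpace X] (g h : X → X) : ℝ :=
  ⨆ x, dist (g x) (h x)

def omega {X : Type*} (fn : ℕ → X → X) : ℕ → X → X
  | 0 => id
  | k + 1 => fn (k + 1) ∘ omega fn k

def omegaSeg {X : Type*} (fn : ℕ → X → X) (n : ℕ) : ℕ → X → X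
  | 0 => id
  | k + 1 => fn (n + k + 1) ∘ omegaSeg fn n k

lemma dist_le_supD {X : Type*} [MetricSpace X] [CompactSpace X] {g h : X → X}
    (hg : Continuous g) (hh : Continuous h) (x : X) : dist (g x) (h x) ≤ supD g h :=
  le_ciSup (isCompact_range (hg.dist hh)).bddAbove x
lemma omegaSeg_shift {X : Type*} (fn : ℕ → X → X) :
    ∀ m N, omegaSeg fn N (m + 1) = omegaSeg fn (N + 1) m ∘ fn (N + 1) := by
  intro m
  induction m with
  | zero => intro N; funext x; simp [omegaSeg]
  | succ k ih =>
      intro N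
      show fn (N + (k + 1) + 1) ∘ omegaSeg fn N (k + 1) = _
      rw [ih N, show N + (k + 1) + 1 = (N + 1) + k + 1 by omega]
      rfl

lemma iterate_comm {X : Type*} {f : X → X} {fn : ℕ → X → X}
    (hcomm : ∀ n, fn n ∘ f = f ∘ fn n) (k m : ℕ) (x : X) :
    f^[m] (fn k x) = fn k (f^[m] x) := by
  induction m generalizing x with
  | zero => rfl
  | succ j ih =>
      rw [Function.iterate_succ_apply, Function.iterate_succ_apply]
      rw [show f (fn k x) = fn k (f x) from congrFun (hcomm k).symm x]
      exact ih (f x)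

lemma seg_estimate {X : Type*} [MetricSpace X] [CompactSpace X]
    {f : X → X} {fn : ℕ → X → X} (hf : Continuous f) (hfn : ∀ n, Continuous (fn n))
    (hcomm : ∀ n, fn n ∘ f = f ∘ fn n) :
    ∀ m N (x : X), dist (omegaSeg fn N m x) (f^[m] x) ≤
      ∑ j ∈ Finset.range m, supD (fn (N + j + 1)) f := by
  intro m
  induction m with
  | zero => intro N x; simp [omegaSeg]
  | succ k ih =>
      intro N x
      rw [omegaSeg_shift]
      have h1 : dist (omegaSeg fn (N + 1) k (fn (N + 1) x)) (f^[k] (fn (N + 1) x)) ≤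
          ∑ j ∈ Finset.range k, supD (fn (N + 1 + j + 1)) f := ih (N + 1) (fn (N + 1) x)
      have h2 : dist (f^[k] (fn (N + 1) x)) (f^[k + 1] x) ≤ supD (fn (N + 1)) f := by
        rw [iterate_comm hcomm, Function.iterate_succ_apply']
        exact dist_le_supD (hfn _) hf _
      calc dist ((omegaSeg fn (N + 1) k ∘ fn (N + 1)) x) (f^[k + 1] x)
          ≤ dist (omegaSeg fn (N + 1) k (fn (N + 1) x)) (f^[k] (fn (N + 1) x)) +
            dist (f^[k] (fn (N + 1) x)) (f^[k + 1] x) := dist_triangle _ _ _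
        _ ≤ (∑ j ∈ Finset.range k, supD (fn (N + 1 + j + 1)) f) + supD (fn (N + 1)) f :=
            add_le_add h1 h2
        _ = ∑ j ∈ Finset.range (k + 1), supD (fn (N + j + 1)) f := by
            rw [Finset.sum_range_succ']
            simp only [show ∀ j, N + (j + 1) + 1 = N + 1 + j + 1 from fun j => by omega,
              Nat.add_zero]

lemma omega_decomp {X : Type*} (fn : ℕ → X → X) :
    ∀ m N, omega fn (N + m) = omegaSeg fn N m ∘ omega fn N := by
  intro m
  induction m with
  | zero => intro N; rfl
  | succ k ih =>
      intro N
      show fn (N + k + 1) ∘ omega fn (N + k) = _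
      rw [ih N]
      rfl

theorem stmt7 {X : Type*} [MetricSpace X] [CompactSpace X] [Nonempty X]
    (f : X → X) (fn : ℕ → X → X)
    (hf : Continuous f) (hfsurj : Function.Surjective f)
    (hfn : ∀ n, Continuous (fn n))
    (hsurj : ∀ n, Function.Surjective (fn n))
    (hfo : ∀ n, ∀ U : Set X, IsOpen U → U.Nonempty → (interior (fn n '' U)).Nonempty)
    (hcomm : ∀ n, fn n ∘ f = f ∘ fn n)
    (hsum : Summable fun n => supD (fn (n + 1)) f)
    (htrans : ∀ U V : Set X, IsOpen U → IsOpen V → U.Nonempty → V.Nonempty →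
      ∃ n : ℕ, 1 ≤ n ∧ (f^[n] '' U ∩ V).Nonempty) :
    ∀ U V : Set X, IsOpen U → IsOpen V → U.Nonempty → V.Nonempty →
      ∃ n : ℕ, 1 ≤ n ∧ (omega fn n '' U ∩ V).Nonempty := by
  intro U V hU hV hUne hVne
  obtain ⟨v, hv⟩ := hVne
  obtain ⟨ε, hε, hball⟩ := Metric.isOpen_iff.mp hV v hv
  -- nonnegativity of the terms
  have h0 : ∀ j : ℕ, 0 ≤ supD (fn (j + 1)) f := fun j => by
    obtain ⟨x⟩ := ‹Nonempty X›
    exact le_trans dist_nonneg (dist_le_supD (hfn _) hf x)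
  -- tail sums tend to 0
  have htail : Tendsto (fun N => ∑' k : ℕ, supD (fn (k + N + 1)) f) atTop (nhds 0) :=
    tendsto_sum_nat_add fun n => supD (fn (n + 1)) f
  have hev : ∀ᶠ N in atTop, ∑' k : ℕ, supD (fn (k + N + 1)) f < ε / 2 := by
    have := htail.eventually (eventually_lt_nhds (show (0:ℝ) < ε / 2 by linarith))
    simpa using this
  obtain ⟨N₀, hN₀⟩ := hev.exists_forall_of_atTop
  set N := max N₀ 1 with hN
  have hNtail : ∑' k : ℕ, supD (fn (k + N + 1)) f < ε / 2 := hN₀ N (le_max_left _ _)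
  -- feeble openness of omega images
  have hfeeble : ∀ n (W : Set X), IsOpen W → W.Nonempty →
      (interior (omega fn n '' W)).Nonempty := by
    intro n
    induction n with
    | zero =>
        intro W hW hWne
        simpa [omega, hW.interior_eq] using hWne
    | succ k ih =>
        intro W hW hWne
        obtain ⟨y, hy⟩ := hfo (k + 1) _ isOpen_interior (ih W hW hWne)
        refine ⟨y, ?_⟩
        have : omega fn (k + 1) '' W = fn (k + 1) '' (omega fn k '' W) := by
          rw [show omega fn (k + 1) = fn (k + 1) ∘ omega fn k from rfl, Set.image_comp]
        rw [this]
        exact interior_mono (Set.image_mono interior_subset) hy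
  set W := interior (omega fn N '' U) with hW
  have hWopen : IsOpen W := isOpen_interior
  have hWne : W.Nonempty := hfeeble N U hU hUne
  -- apply transitivity of f to W and ball v (ε/2)
  obtain ⟨m, hm1, z, hz⟩ := htrans W (Metric.ball v (ε / 2)) hWopen Metric.isOpen_ball hWne
    ⟨v, Metric.mem_ball_self (by linarith)⟩
  obtain ⟨⟨w, hwW, hwz⟩, hzball⟩ := hz
  obtain ⟨u, huU, huw⟩ : w ∈ omega fn N '' U := interior_subset hwW
  refine ⟨N + m, le_trans (le_max_right N₀ 1) (Nat.le_add_right N m), omega fn (N + m) u, ⟨u, huU, rfl⟩, hball ?_⟩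
  -- estimate
  have hdec : omega fn (N + m) u = omegaSeg fn N m w := by
    rw [omega_decomp fn m N]; simp [huw]
  have hsum' : Summable fun k : ℕ => supD (fn (k + N + 1)) f := by
    have := (summable_nat_add_iff N).mpr hsum
    simpa using this
  have hest : dist (omega fn (N + m) u) (f^[m] w) ≤ ∑' k : ℕ, supD (fn (k + N + 1)) f := by
    rw [hdec]
    refine le_trans (seg_estimate hf hfn hcomm m N w) ?_
    refine le_trans (le_of_eq ?_) (Summable.sum_le_tsum (Finset.range m) (fun i _ => h0 _) hsum')
    apply Finset.sum_congr rfl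
    intro j _
    rw [show N + j + 1 = j + N + 1 by omega]
  have hdist : dist (f^[m] w) v < ε / 2 := by
    rw [hwz]
    exact Metric.mem_ball.mp hzball
  rw [Metric.mem_ball]
  calc dist (omega fn (N + m) u) v
      ≤ dist (omega fn (N + m) u) (f^[m] w) + dist (f^[m] w) v := dist_triangle _ _ _
    _ < ε / 2 + ε / 2 := add_lt_add_of_le_of_lt (le_trans hest hNtail.le) hdist
    _ = ε := by ring
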